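/- arXiv:2302.06935 — 3 statements merged into one kernel-verified Lean document; each statement's English description precedes it below -/
import Mathlib

section
/- For every real γ, the product Φ(γ)(1-Φ(γ)) satisfies [Φ(γ)(1-Φ(γ))]^{-1} ≤ 4·exp(2γ²/π); equivalently, Φ(γ)(1-Φ(γ)) ≥ (1/4)·exp(-2γ²/π). -/
open MeasureTheory Real Filter Set

/-- The standard Gaussian cumulative distribution function. -/
noncomputable def Phi (x : ℝ) : ℝ :=
  (Real.sqrt (2 * Real.pi))⁻¹ * ∫ t in Set.Iic x, Real.exp (-t ^ 2 / 2)

/-! ### Auxiliary lemmas: rearrangement comparison for the Gaussian on the plane -/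

lemma integrable_g2 : Integrable (fun p : ℝ × ℝ => Real.exp (-(p.1^2 + p.2^2))) := by
  have h : (fun p : ℝ × ℝ => Real.exp (-(p.1^2 + p.2^2)))
      = fun p : ℝ × ℝ => Real.exp (-1 * p.1^2) * Real.exp (-1 * p.2^2) := by
    funext p; rw [← Real.exp_add]; ring_nf
  rw [h, Measure.volume_eq_prod]
  exact (integrable_exp_neg_mul_sq one_pos).mul_prod (integrable_exp_neg_mul_sq one_pos)

/-- Among two sets of equal finite volume, the integral of the radial decreasing Gaussian is
larger on the one which is "closer to the origin". -/
lemma compare_lemma (S D : Set (ℝ × ℝ)) (hS : MeasurableSet S) (hD : MeasurableSet D)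
    (hSfin : volume S ≠ ⊤) (hvol : volume S = volume D) (R : ℝ)
    (hSD : ∀ p ∈ S \ D, p.1^2 + p.2^2 ≥ R^2)
    (hDS : ∀ p ∈ D, p.1^2 + p.2^2 ≤ R^2) :
    ∫ p in S, Real.exp (-(p.1^2 + p.2^2)) ≤ ∫ p in D, Real.exp (-(p.1^2 + p.2^2)) := by
  set g : ℝ × ℝ → ℝ := fun p => Real.exp (-(p.1^2 + p.2^2)) with hg
  have hgi : Integrable g := integrable_g2
  have hDfin : volume D ≠ ⊤ := hvol ▸ hSfin
  have h1 : (∫ p in S ∩ D, g p) + ∫ p in S \ D, g p = ∫ p in S, g p :=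
    integral_inter_add_diff hD hgi.integrableOn
  have h2 : (∫ p in S ∩ D, g p) + ∫ p in D \ S, g p = ∫ p in D, g p := by
    rw [inter_comm]; exact integral_inter_add_diff hS hgi.integrableOn
  have hvol2 : volume (S \ D) = volume (D \ S) := by
    have e1 := measure_diff_add_inter S (μ := volume) hD
    have e2 := measure_diff_add_inter D (μ := volume) hS
    rw [inter_comm] at e2
    have hfin : volume (S ∩ D) ≠ ⊤ :=
      fun h => hSfin (top_le_iff.1 (h ▸ measure_mono inter_subset_left))
    have : volume (S \ D) + volume (S ∩ D) = volume (D \ S) + volume (S ∩ D) := by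
      rw [e1, e2, hvol]
    exact (ENNReal.add_left_inj hfin).1 this
  have key : (∫ p in S \ D, g p) ≤ ∫ p in D \ S, g p := by
    have hc : ∀ {T : Set (ℝ × ℝ)}, volume T ≠ ⊤ →
        IntegrableOn (fun _ : ℝ × ℝ => Real.exp (-R^2)) T := by
      intro T hT
      exact integrableOn_const hT
    have hfinSD : volume (S \ D) ≠ ⊤ :=
      fun h => hSfin (top_le_iff.1 (h ▸ measure_mono diff_subset))
    have hfinDS : volume (D \ S) ≠ ⊤ :=
      fun h => hDfin (top_le_iff.1 (h ▸ measure_mono diff_subset))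
    have b1 : (∫ p in S \ D, g p) ≤ ∫ _ in S \ D, Real.exp (-R^2) := by
      apply setIntegral_mono_on hgi.integrableOn (hc hfinSD) (hS.diff hD)
      intro x hx
      exact Real.exp_le_exp.2 (by have := hSD x hx; linarith)
    have b2 : (∫ _ in D \ S, Real.exp (-R^2)) ≤ ∫ p in D \ S, g p := by
      apply setIntegral_mono_on (hc hfinDS) hgi.integrableOn (hD.diff hS)
      intro x hx
      exact Real.exp_le_exp.2 (by have := hDS x hx.1; linarith)
    calc (∫ p in S \ D, g p) ≤ ∫ _ in S \ D, Real.exp (-R^2) := b1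
      _ = ∫ _ in D \ S, Real.exp (-R^2) := by rw [setIntegral_const, setIntegral_const]; simp only [Measure.real, hvol2]
      _ ≤ ∫ p in D \ S, g p := b2
  linarith [h1, h2, key]

/-- The closed disc of radius `R` centred at the origin, as a subset of `ℝ × ℝ`. -/
noncomputable def Disc (R : ℝ) : Set (ℝ × ℝ) := {p | p.1^2 + p.2^2 ≤ R^2}

lemma measurableSet_disc (R : ℝ) : MeasurableSet (Disc R) := by
  apply measurableSet_le <;> fun_prop

lemma disc_eq_preimage (R : ℝ) (hR : 0 ≤ R) :
    Complex.measurableEquivRealProd ⁻¹' Disc R = Metric.closedBall (0 : ℂ) R := by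
  ext z
  simp only [Disc, mem_preimage, Complex.measurableEquivRealProd_apply, mem_setOf_eq,
    Metric.mem_closedBall, Complex.dist_eq, sub_zero]
  have habs : z.re^2 + z.im^2 = ‖z‖^2 := by
    rw [Complex.sq_norm, Complex.normSq_apply]; ring
  rw [habs]
  constructor
  · intro h; nlinarith [norm_nonneg z]
  · intro h; nlinarith [norm_nonneg z]

lemma volume_disc (R : ℝ) (hR : 0 ≤ R) :
    volume (Disc R) = ENNReal.ofReal (Real.pi * R^2) := by
  have h := Complex.volume_preserving_equiv_real_prod.measure_preimage
    (s := Disc R) (measurableSet_disc R).nullMeasurableSet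
  rw [disc_eq_preimage R hR, Complex.volume_closedBall] at h
  rw [← h, ENNReal.ofReal_mul Real.pi_pos.le, ← ENNReal.ofReal_pow hR, mul_comm,
    ← NNReal.coe_real_pi, ENNReal.ofReal_coe_nnreal]

lemma integral_rho (R : ℝ) (hR : 0 ≤ R) :
    ∫ ρ in Ioc 0 R, ρ * Real.exp (-ρ^2) = (1 - Real.exp (-R^2)) / 2 := by
  rw [← intervalIntegral.integral_of_le hR]
  have hderiv : ∀ x ∈ Set.uIcc (0:ℝ) R,
      HasDerivAt (fun ρ : ℝ => -(Real.exp (-ρ^2) / 2)) (x * Real.exp (-x^2)) x := by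
    intro x _
    have h1 : HasDerivAt (fun ρ : ℝ => -ρ^2) (-(2*x)) x := by
      have := (hasDerivAt_pow 2 x).neg; norm_num at this; exact this
    have h2 := (h1.exp.div_const 2).neg
    exact h2.congr_deriv (by ring)
  rw [intervalIntegral.integral_eq_sub_of_hasDerivAt hderiv]
  · simp [Real.exp_zero]; ring
  · apply Continuous.intervalIntegrable; fun_prop

lemma integral_disc (R : ℝ) (hR : 0 ≤ R) :
    ∫ p in Disc R, Real.exp (-(p.1^2 + p.2^2)) = Real.pi * (1 - Real.exp (-R^2)) := by
  classical
  rw [← integral_indicator (measurableSet_disc R), ← integral_comp_polarCoord_symm]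
  have heq : EqOn (fun p : ℝ × ℝ => p.1 • (Disc R).indicator
      (fun p : ℝ × ℝ => Real.exp (-(p.1^2 + p.2^2))) (polarCoord.symm p))
      (fun p : ℝ × ℝ => (Ioc (0:ℝ) R).indicator (fun ρ => ρ * Real.exp (-ρ^2)) p.1
        * (fun _ : ℝ => (1:ℝ)) p.2)
      polarCoord.target := by
    intro p hp
    rw [polarCoord_target] at hp
    obtain ⟨hp1, _⟩ := hp
    simp only [polarCoord_symm_apply, smul_eq_mul, mul_one]
    have hsq : (p.1 * Real.cos p.2)^2 + (p.1 * Real.sin p.2)^2 = p.1^2 := by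
      have := Real.sin_sq_add_cos_sq p.2; nlinarith [this]
    rw [Set.indicator_apply, Set.indicator_apply]
    simp only [Disc, mem_setOf_eq, hsq, mem_Ioc]
    have hiff : p.1^2 ≤ R^2 ↔ (0 < p.1 ∧ p.1 ≤ R) := by
      constructor
      · intro h; exact ⟨hp1, by nlinarith⟩
      · intro h; nlinarith [h.2]
    by_cases hc : p.1^2 ≤ R^2
    · rw [if_pos hc, if_pos (hiff.1 hc)]
    · rw [if_neg hc, if_neg (fun h => hc (hiff.2 h)), mul_zero]
  rw [setIntegral_congr_fun polarCoord.open_target.measurableSet heq, polarCoord_target,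
    Measure.volume_eq_prod,
    setIntegral_prod_mul ((Ioc (0:ℝ) R).indicator (fun ρ => ρ * Real.exp (-ρ^2)))
      (fun _ : ℝ => (1:ℝ)) (Ioi 0) (Ioo (-π) π)]
  rw [setIntegral_indicator measurableSet_Ioc]
  have hinter : Ioi (0:ℝ) ∩ Ioc 0 R = Ioc 0 R :=
    inter_eq_self_of_subset_right Ioc_subset_Ioi_self
  rw [hinter, integral_rho R hR]
  simp only [setIntegral_const, smul_eq_mul, mul_one, Real.volume_Ioo]
  rw [Real.volume_real_Ioo_of_le (by linarith [Real.pi_pos])]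
  ring

lemma integral_square (s : ℝ) :
    ∫ p in Icc (-s) s ×ˢ Icc (-s) s, Real.exp (-(p.1^2 + p.2^2))
      = (∫ u in Icc (-s) s, Real.exp (-u^2))^2 := by
  have h : ∀ p : ℝ × ℝ, Real.exp (-(p.1^2 + p.2^2))
      = Real.exp (-p.1^2) * Real.exp (-p.2^2) := by
    intro p; rw [← Real.exp_add]; ring_nf
  simp_rw [h, Measure.volume_eq_prod]
  rw [setIntegral_prod_mul (fun u : ℝ => Real.exp (-u^2)) (fun u : ℝ => Real.exp (-u^2))]
  ring

/-- Pólya's inequality: `(∫_{-s}^s e^{-u²} du)² ≤ π (1 - e^{-4s²/π})`. -/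
lemma key_ineq (s : ℝ) (hs : 0 ≤ s) :
    (∫ u in Icc (-s) s, Real.exp (-u^2))^2
      ≤ Real.pi * (1 - Real.exp (-(4 * s^2 / Real.pi))) := by
  set R : ℝ := 2 * s / Real.sqrt Real.pi with hRdef
  have hR : 0 ≤ R := by positivity
  have hR2 : R^2 = 4 * s^2 / Real.pi := by
    rw [hRdef, div_pow, Real.sq_sqrt Real.pi_pos.le]; ring
  have hvolS : volume (Icc (-s) s ×ˢ Icc (-s) s) = ENNReal.ofReal (Real.pi * R^2) := by
    rw [Measure.volume_eq_prod, Measure.prod_prod, Real.volume_Icc,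
      ← ENNReal.ofReal_mul (by linarith)]
    congr 1
    rw [hR2]
    field_simp
    ring
  have hcomp := compare_lemma (Icc (-s) s ×ˢ Icc (-s) s) (Disc R)
    (measurableSet_Icc.prod measurableSet_Icc) (measurableSet_disc R)
    (by rw [hvolS]; exact ENNReal.ofReal_ne_top)
    (by rw [hvolS, volume_disc R hR]) R
    (fun p hp => le_of_lt (lt_of_not_ge (fun h => hp.2 h)))
    (fun p hp => hp)
  rw [integral_square, integral_disc R hR, hR2] at hcomp
  exact hcomp

/-! ### Properties of `Phi` -/

lemma gauss_integrable : Integrable (fun t : ℝ => Real.exp (-t^2/2)) := by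
  have h : (fun t : ℝ => Real.exp (-t^2/2)) = fun t => Real.exp (-(1/2) * t^2) := by
    funext t; ring_nf
  rw [h]; exact integrable_exp_neg_mul_sq (by norm_num)

lemma gauss_total : ∫ t : ℝ, Real.exp (-t^2/2) = Real.sqrt (2 * Real.pi) := by
  have h : (fun t : ℝ => Real.exp (-t^2/2)) = fun t => Real.exp (-(1/2) * t^2) := by
    funext t; ring_nf
  rw [h, integral_gaussian]
  congr 1
  rw [div_div_eq_mul_div]
  ring

lemma Phi_add_neg (γ : ℝ) : Phi γ + Phi (-γ) = 1 := by
  have hs : (0:ℝ) < Real.sqrt (2 * Real.pi) := Real.sqrt_pos.2 (by positivity)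
  have h1 : (∫ t in Iic (-γ), Real.exp (-t^2/2)) = ∫ t in Ioi γ, Real.exp (-t^2/2) := by
    rw [← integral_comp_neg_Ioi γ (fun t => Real.exp (-t^2/2))]
    congr 1; funext t; ring_nf
  have h2 : (∫ t in Iic γ, Real.exp (-t^2/2)) + ∫ t in Ioi γ, Real.exp (-t^2/2)
      = Real.sqrt (2 * Real.pi) := by
    rw [intervalIntegral.integral_Iic_add_Ioi gauss_integrable.integrableOn
      gauss_integrable.integrableOn, gauss_total]
  unfold Phi
  rw [h1, ← mul_add, h2, inv_mul_cancel₀ hs.ne']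

lemma Phi_sub_neg (γ : ℝ) (hγ : 0 ≤ γ) :
    Phi γ - Phi (-γ) = (Real.sqrt (2 * Real.pi))⁻¹ * (Real.sqrt 2 *
      ∫ u in Icc (-(γ / Real.sqrt 2)) (γ / Real.sqrt 2), Real.exp (-u^2)) := by
  have h2 : (0:ℝ) < Real.sqrt 2 := Real.sqrt_pos.2 (by norm_num)
  have h1 : (∫ t in Iic γ, Real.exp (-t^2/2)) - ∫ t in Iic (-γ), Real.exp (-t^2/2)
      = ∫ t in (-γ)..γ, Real.exp (-t^2/2) :=
    intervalIntegral.integral_Iic_sub_Iic gauss_integrable.integrableOn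
      gauss_integrable.integrableOn
  have h3 : (∫ t in (-γ)..γ, Real.exp (-t^2/2))
      = Real.sqrt 2 * ∫ u in (-γ/Real.sqrt 2)..(γ/Real.sqrt 2), Real.exp (-u^2) := by
    have hfun : ∀ t : ℝ, Real.exp (-t^2/2) = Real.exp (-(t / Real.sqrt 2)^2) := by
      intro t
      rw [div_pow, Real.sq_sqrt (by norm_num : (0:ℝ) ≤ 2)]
      ring_nf
    simp_rw [hfun]
    rw [intervalIntegral.integral_comp_div (fun u => Real.exp (-u^2)) h2.ne', smul_eq_mul]
  unfold Phi
  rw [← mul_sub, h1, h3]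
  congr 2
  rw [intervalIntegral.integral_of_le
    (by rw [neg_div]; linarith [div_nonneg hγ h2.le] : -γ/Real.sqrt 2 ≤ γ/Real.sqrt 2),
    ← integral_Icc_eq_integral_Ioc]
  congr 1
  rw [neg_div]

lemma main_nonneg (γ : ℝ) (hγ : 0 ≤ γ) :
    Phi γ * (1 - Phi γ) ≥ (1/4) * Real.exp (-(2*γ^2)/Real.pi) := by
  have hπ := Real.pi_pos
  set s := γ / Real.sqrt 2 with hs
  have hs0 : 0 ≤ s := div_nonneg hγ (Real.sqrt_nonneg 2)
  set Ic := ∫ u in Icc (-s) s, Real.exp (-u^2) with hIc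
  have hkey := key_ineq s hs0
  have hs2 : s^2 = γ^2/2 := by rw [hs, div_pow, Real.sq_sqrt (by norm_num : (0:ℝ) ≤ 2)]
  have harg : 4 * s^2 / Real.pi = 2*γ^2/Real.pi := by rw [hs2]; ring
  rw [harg] at hkey
  have hB : 1 - Phi γ = Phi (-γ) := by linarith [Phi_add_neg γ]
  have hdiff := Phi_sub_neg γ hγ
  have hd2 : (Phi γ - Phi (-γ))^2 = Ic^2 / Real.pi := by
    rw [hdiff]
    rw [mul_pow, mul_pow, inv_pow, Real.sq_sqrt (by positivity : (0:ℝ) ≤ 2*Real.pi),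
      Real.sq_sqrt (by norm_num : (0:ℝ) ≤ 2)]
    rw [← hIc]
    field_simp
  have hprod : Phi γ * Phi (-γ) = (1 - (Phi γ - Phi (-γ))^2)/4 := by
    have h := Phi_add_neg γ
    have hB' : Phi (-γ) = 1 - Phi γ := by linarith
    rw [hB']; ring
  rw [hB, hprod, hd2]
  have h5 : Ic^2/Real.pi ≤ 1 - Real.exp (-(2*γ^2/Real.pi)) := by
    rw [div_le_iff₀ hπ]
    nlinarith [hkey]
  have harg2 : -(2*γ^2)/Real.pi = -(2*γ^2/Real.pi) := by ring
  rw [harg2]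
  linarith [h5]

/-- For every real `γ`, `[Φ(γ)(1-Φ(γ))]⁻¹ ≤ 4·exp(2γ²/π)`; equivalently,
`Φ(γ)(1-Φ(γ)) ≥ (1/4)·exp(-2γ²/π)`. -/
theorem stmt0 (γ : ℝ) :
    (Phi γ * (1 - Phi γ))⁻¹ ≤ 4 * Real.exp (2 * γ ^ 2 / Real.pi) ∧
    Phi γ * (1 - Phi γ) ≥ (1 / 4) * Real.exp (-(2 * γ ^ 2) / Real.pi) := by
  have hmain : Phi γ * (1 - Phi γ) ≥ (1/4) * Real.exp (-(2*γ^2)/Real.pi) := by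
    rcases le_or_gt 0 γ with h | h
    · exact main_nonneg γ h
    · have h1 := main_nonneg (-γ) (by linarith)
      have h3 : (-γ)^2 = γ^2 := by ring
      rw [h3] at h1
      have h2 : Phi γ = 1 - Phi (-γ) := by linarith [Phi_add_neg γ]
      rw [h2]
      have h4 : (1 - Phi (-γ)) * (1 - (1 - Phi (-γ))) = Phi (-γ) * (1 - Phi (-γ)) := by ring
      rw [h4]
      exact h1
  refine ⟨?_, hmain⟩
  have hcpos : (0:ℝ) < (1/4) * Real.exp (-(2*γ^2)/Real.pi) := by positivity
  have hinv : ((1/4) * Real.exp (-(2*γ^2)/Real.pi))⁻¹ = 4 * Real.exp (2*γ^2/Real.pi) := by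
    rw [mul_inv, ← Real.exp_neg]
    norm_num
    congr 1
    ring
  calc (Phi γ * (1 - Phi γ))⁻¹ ≤ ((1/4) * Real.exp (-(2*γ^2)/Real.pi))⁻¹ :=
        inv_anti₀ hcpos hmain
    _ = 4 * Real.exp (2*γ^2/Real.pi) := hinv
end

section
/- Let p(a) be a probability density on (0,∞) and θ = (α,β) ∈ (0,∞)². Let p(z|a,θ) = Φ(γ(a))^{z}(1-Φ(γ(a)))^{1-z} for z ∈ {0,1}, where γ(a) = (log a - log α)/β. Assume the integrals A_{kj} below are finite. Then the Fisher information matrix I(θ), with entries I(θ)_{ij} = -∫_{(0,∞)} Σ_{z∈{0,1}} p(z|a,θ) · ∂²(log p(z|a,θ))/∂θ_i∂θ_j · p(a) da (θ₁ = α, θ₂ = β), equals the 2×2 matrix with I(θ)_{11} = (A₀₁+A₀₂)/(α²β²), I(θ)_{12} = I(θ)_{21} = (A₁₁+A₁₂)/(αβ³), and I(θ)_{22} = (A₂₁+A₂₂)/β⁴, where for k = 0,1,2: A_{k1} = ∫_0^∞ log^k(a/α)·Φ'(γ(a))²/Φ(γ(a))·p(a) da and A_{k2} = ∫_0^∞ log^k(a/α)·Φ'(γ(a))²/Φ(-γ(a))·p(a)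 da, with Φ'(x) = (2π)^{-1/2}exp(-x²/2). -/
open MeasureTheory Real Filter Set

/-- The standard Gaussian density `Φ'(x) = (2π)^{-1/2} exp(-x²/2)`. -/
noncomputable def Phi' (x : ℝ) : ℝ :=
  (Real.sqrt (2 * Real.pi))⁻¹ * Real.exp (-x ^ 2 / 2)

lemma expInt : Integrable (fun t : ℝ => Real.exp (-t ^ 2 / 2)) := by
  have h : (fun t : ℝ => Real.exp (-t ^ 2 / 2)) = fun t : ℝ => Real.exp (-(1/2 : ℝ) * t ^ 2) := by
    funext t; ring_nf
  rw [h]; exact integrable_exp_neg_mul_sq (by norm_num)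

lemma intTotal : (∫ t : ℝ, Real.exp (-t ^ 2 / 2)) = Real.sqrt (2 * π) := by
  have h : (fun t : ℝ => Real.exp (-t ^ 2 / 2)) = fun t : ℝ => Real.exp (-(1/2 : ℝ) * t ^ 2) := by
    funext t; ring_nf
  rw [h, integral_gaussian, show π / (1/2:ℝ) = 2 * π by ring]

lemma sqrt2pi_pos : 0 < Real.sqrt (2 * π) :=
  Real.sqrt_pos.2 (by positivity)

lemma intIic_pos (x : ℝ) : 0 < ∫ t in Iic x, Real.exp (-t ^ 2 / 2) := by
  rw [setIntegral_pos_iff_support_of_nonneg_ae]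
  · have h : (Function.support fun t : ℝ => Real.exp (-t ^ 2 / 2)) = Set.univ := by
      ext t; simp [Real.exp_ne_zero]
    rw [h, Set.univ_inter]
    simp [Real.volume_Iic]
  · filter_upwards with t using (Real.exp_pos _).le
  · exact expInt.integrableOn

lemma intIoi_pos (x : ℝ) : 0 < ∫ t in Ioi x, Real.exp (-t ^ 2 / 2) := by
  rw [setIntegral_pos_iff_support_of_nonneg_ae]
  · have h : (Function.support fun t : ℝ => Real.exp (-t ^ 2 / 2)) = Set.univ := by
      ext t; simp [Real.exp_ne_zero]
    rw [h, Set.univ_inter]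
    simp [Real.volume_Ioi]
  · filter_upwards with t using (Real.exp_pos _).le
  · exact expInt.integrableOn

lemma Phi_pos (x : ℝ) : 0 < Phi x :=
  mul_pos (inv_pos.2 sqrt2pi_pos) (intIic_pos x)

lemma Iic_add_Ioi (x : ℝ) :
    (∫ t in Iic x, Real.exp (-t ^ 2 / 2)) + (∫ t in Ioi x, Real.exp (-t ^ 2 / 2))
      = Real.sqrt (2 * π) := by
  rw [intervalIntegral.integral_Iic_add_Ioi expInt.integrableOn expInt.integrableOn, intTotal]

lemma Phi_lt_one (x : ℝ) : Phi x < 1 := by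
  have h := Iic_add_Ioi x
  have h2 := intIoi_pos x
  rw [Phi, inv_mul_lt_iff₀ sqrt2pi_pos, mul_one]
  linarith

lemma Phi_neg (x : ℝ) : Phi (-x) = 1 - Phi x := by
  have h1 : (∫ t in Iic (-x), Real.exp (-t ^ 2 / 2)) = ∫ t in Ioi x, Real.exp (-t ^ 2 / 2) := by
    have := integral_comp_neg_Iic (-x) (fun t => Real.exp (-t ^ 2 / 2))
    simp only [neg_neg] at this
    rw [← this]
    congr 1; funext t; ring_nf
  have h := Iic_add_Ioi x
  have h2 : (∫ t in Ioi x, Real.exp (-t ^ 2 / 2))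
      = Real.sqrt (2 * π) - ∫ t in Iic x, Real.exp (-t ^ 2 / 2) := by linarith
  rw [Phi, Phi, h1, h2, mul_sub, inv_mul_cancel₀ sqrt2pi_pos.ne']

lemma hasDerivAt_Phi (x : ℝ) : HasDerivAt Phi (Phi' x) x := by
  have hrep : Phi = fun y =>
      (Real.sqrt (2 * π))⁻¹ *
        ((∫ t in Iic (0:ℝ), Real.exp (-t ^ 2 / 2)) + ∫ t in (0:ℝ)..y, Real.exp (-t ^ 2 / 2)) := by
    funext y
    rw [← intervalIntegral.integral_Iic_sub_Iic expInt.integrableOn expInt.integrableOn]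
    unfold Phi; ring
  have hD : HasDerivAt (fun y => ∫ t in (0:ℝ)..y, Real.exp (-t ^ 2 / 2))
      (Real.exp (-x ^ 2 / 2)) x := by
    refine intervalIntegral.integral_hasDerivAt_right expInt.intervalIntegrable ?_ ?_
    · exact (Real.continuous_exp.comp (by continuity)).aestronglyMeasurable.stronglyMeasurableAtFilter
    · exact (Real.continuous_exp.comp (by continuity)).continuousAt
  rw [hrep]
  have := (hD.const_add (∫ t in Iic (0:ℝ), Real.exp (-t ^ 2 / 2))).const_mul
    (Real.sqrt (2 * π))⁻¹
  simpa [Phi'] using this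

lemma hasDerivAt_Phi' (x : ℝ) : HasDerivAt Phi' (-x * Phi' x) x := by
  have h1 : HasDerivAt (fun y : ℝ => -y ^ 2 / 2) (-x) x := by
    have := ((hasDerivAt_pow 2 x).neg).div_const 2
    refine this.congr_deriv ?_; push_cast; ring
  have := (h1.exp).const_mul (Real.sqrt (2 * π))⁻¹
  have h2 : Phi' = fun y => (Real.sqrt (2 * π))⁻¹ * Real.exp (-y ^ 2 / 2) := rfl
  rw [h2]
  refine this.congr_deriv ?_
  simp only [Phi']; ring

/-- `γ(a) = (log a - log α)/β`. -/
noncomputable def gam (α β a : ℝ) : ℝ := (Real.log a - Real.log α) / β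

/-- The conditional probability `p(z|a,θ) = Φ(γ(a))^z (1-Φ(γ(a)))^{1-z}` for `z ∈ {0,1}`. -/
noncomputable def pz (z : ℕ) (α β a : ℝ) : ℝ :=
  Phi (gam α β a) ^ z * (1 - Phi (gam α β a)) ^ (1 - z)

/-- `log p(z|a,θ)` as a function of the parameters. -/
noncomputable def logp (z : ℕ) (a α β : ℝ) : ℝ :=
  (z : ℝ) * Real.log (Phi (gam α β a)) +
    (1 - (z : ℝ)) * Real.log (1 - Phi (gam α β a))

/-- Second partial derivative `∂²(log p)/∂α²`. -/
noncomputable def d2aa (z : ℕ) (a α β : ℝ) : ℝ :=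
  deriv (fun α' => deriv (fun α'' => logp z a α'' β) α') α

/-- Mixed second partial derivative `∂²(log p)/∂α∂β`. -/
noncomputable def d2ab (z : ℕ) (a α β : ℝ) : ℝ :=
  deriv (fun α' => deriv (fun β' => logp z a α' β') β) α

/-- Mixed second partial derivative `∂²(log p)/∂β∂α`. -/
noncomputable def d2ba (z : ℕ) (a α β : ℝ) : ℝ :=
  deriv (fun β' => deriv (fun α' => logp z a α' β') α) β

/-- Second partial derivative `∂²(log p)/∂β²`. -/
noncomputable def d2bb (z : ℕ) (a α β : ℝ) : ℝ :=
  deriv (fun β' => deriv (fun β'' => logp z a α β'') β') β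

lemma one_sub_Phi_pos (x : ℝ) : 0 < 1 - Phi x := by linarith [Phi_lt_one x]

noncomputable def S1 (z x : ℝ) : ℝ :=
  z * (Phi' x / Phi x) - (1 - z) * (Phi' x / (1 - Phi x))
noncomputable def S2 (z x : ℝ) : ℝ :=
  z * ((-x * Phi' x * Phi x - Phi' x ^ 2) / Phi x ^ 2)
  - (1 - z) * ((-x * Phi' x * (1 - Phi x) + Phi' x ^ 2) / (1 - Phi x) ^ 2)

lemma hasDerivAt_Sz (z x : ℝ) :
    HasDerivAt (fun y => z * Real.log (Phi y) + (1 - z) * Real.log (1 - Phi y))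
      (S1 z x) x := by
  have h1 := ((hasDerivAt_Phi x).log (Phi_pos x).ne').const_mul z
  have h2 : HasDerivAt (fun y => 1 - Phi y) (-Phi' x) x := (hasDerivAt_Phi x).const_sub 1
  have h3 := (h2.log (one_sub_Phi_pos x).ne').const_mul (1 - z)
  have := h1.add h3
  refine this.congr_deriv ?_
  simp only [S1]; ring

lemma hasDerivAt_S1 (z x : ℝ) : HasDerivAt (fun y => S1 z y) (S2 z x) x := by
  have h1 := ((hasDerivAt_Phi' x).div (hasDerivAt_Phi x) (Phi_pos x).ne').const_mul z
  have h2p : HasDerivAt (fun y => 1 - Phi y) (-Phi' x) x := (hasDerivAt_Phi x).const_sub 1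
  have h2 := ((hasDerivAt_Phi' x).div h2p (one_sub_Phi_pos x).ne').const_mul (1 - z)
  have := h1.sub h2
  refine this.congr_deriv ?_
  simp only [S2]; ring

lemma hg_a (a β : ℝ) {α : ℝ} (hα : 0 < α) :
    HasDerivAt (fun α' => gam α' β a) (-(α⁻¹ * β⁻¹)) α := by
  have := ((Real.hasDerivAt_log hα.ne').const_sub (Real.log a)).div_const β
  simp only [gam]
  refine this.congr_deriv ?_
  ring

lemma hg_b (a α : ℝ) {β : ℝ} (hβ : β ≠ 0) :
    HasDerivAt (fun β' => gam α β' a)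
      (-((Real.log a - Real.log α) * (β ^ 2)⁻¹)) β := by
  have := (hasDerivAt_inv hβ).const_mul (Real.log a - Real.log α)
  simp only [gam, div_eq_mul_inv]
  refine this.congr_deriv ?_
  ring

lemma deriv_inner_a (z : ℕ) (a β : ℝ) {α' : ℝ} (hα' : 0 < α') :
    deriv (fun α'' => logp z a α'' β) α' = S1 (z : ℝ) (gam α' β a) * -(α'⁻¹ * β⁻¹) := by
  simp only [logp]
  exact ((hasDerivAt_Sz (z : ℝ) (gam α' β a)).comp α' (hg_a a β hα')).deriv

lemma deriv_inner_b (z : ℕ) (a α : ℝ) {β : ℝ} (hβ : β ≠ 0) :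
    deriv (fun β' => logp z a α β') β
      = S1 (z : ℝ) (gam α β a) * -((Real.log a - Real.log α) * (β ^ 2)⁻¹) := by
  simp only [logp]
  exact ((hasDerivAt_Sz (z : ℝ) (gam α β a)).comp β (hg_b a α hβ)).deriv

lemma d2aa_eq (z : ℕ) (a : ℝ) {α β : ℝ} (hα : 0 < α) :
    d2aa z a α β =
      (S2 (z : ℝ) (gam α β a) * -(α⁻¹ * β⁻¹)) * -(α⁻¹ * β⁻¹)
        + S1 (z : ℝ) (gam α β a) * ((α ^ 2)⁻¹ * β⁻¹) := by
  have hev : (fun α' => deriv (fun α'' => logp z a α'' β) α')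
      =ᶠ[nhds α] fun α' => S1 (z : ℝ) (gam α' β a) * -(α'⁻¹ * β⁻¹) := by
    filter_upwards [isOpen_Ioi.mem_nhds hα] with α' hα' using deriv_inner_a z a β hα'
  rw [d2aa, hev.deriv_eq]
  have h1 : HasDerivAt (fun α' => S1 (z : ℝ) (gam α' β a))
      (S2 (z : ℝ) (gam α β a) * -(α⁻¹ * β⁻¹)) α :=
    (hasDerivAt_S1 _ _).comp α (hg_a a β hα)
  have h2 : HasDerivAt (fun α' : ℝ => -(α'⁻¹ * β⁻¹)) ((α ^ 2)⁻¹ * β⁻¹) α := by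
    have := ((hasDerivAt_inv hα.ne').mul_const β⁻¹).neg
    refine this.congr_deriv ?_
    ring
  exact (h1.mul h2).deriv

lemma d2ab_eq (z : ℕ) (a : ℝ) {α β : ℝ} (hα : 0 < α) (hβ : β ≠ 0) :
    d2ab z a α β =
      (S2 (z : ℝ) (gam α β a) * -(α⁻¹ * β⁻¹))
          * -((Real.log a - Real.log α) * (β ^ 2)⁻¹)
        + S1 (z : ℝ) (gam α β a) * (α⁻¹ * (β ^ 2)⁻¹) := by
  have hfe : (fun α' => deriv (fun β' => logp z a α' β') β)
      = fun α' => S1 (z : ℝ) (gam α' β a) * -((Real.log a - Real.log α') * (β ^ 2)⁻¹) :=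
    funext fun α' => deriv_inner_b z a α' hβ
  rw [d2ab, hfe]
  have h1 : HasDerivAt (fun α' => S1 (z : ℝ) (gam α' β a))
      (S2 (z : ℝ) (gam α β a) * -(α⁻¹ * β⁻¹)) α :=
    (hasDerivAt_S1 _ _).comp α (hg_a a β hα)
  have h2 : HasDerivAt (fun α' : ℝ => -((Real.log a - Real.log α') * (β ^ 2)⁻¹))
      (α⁻¹ * (β ^ 2)⁻¹) α := by
    have := (((Real.hasDerivAt_log hα.ne').const_sub (Real.log a)).mul_const ((β ^ 2)⁻¹)).neg
    refine this.congr_deriv ?_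
    ring
  exact (h1.mul h2).deriv

lemma d2ba_eq (z : ℕ) (a : ℝ) {α β : ℝ} (hα : 0 < α) (hβ : β ≠ 0) :
    d2ba z a α β =
      (S2 (z : ℝ) (gam α β a) * -((Real.log a - Real.log α) * (β ^ 2)⁻¹))
          * -(α⁻¹ * β⁻¹)
        + S1 (z : ℝ) (gam α β a) * (α⁻¹ * (β ^ 2)⁻¹) := by
  have hfe : (fun β' => deriv (fun α' => logp z a α' β') α)
      = fun β' => S1 (z : ℝ) (gam α β' a) * -(α⁻¹ * β'⁻¹) :=
    funext fun β' => deriv_inner_a z a β' hα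
  rw [d2ba, hfe]
  have h1 : HasDerivAt (fun β' => S1 (z : ℝ) (gam α β' a))
      (S2 (z : ℝ) (gam α β a) * -((Real.log a - Real.log α) * (β ^ 2)⁻¹)) β :=
    (hasDerivAt_S1 _ _).comp β (hg_b a α hβ)
  have h2 : HasDerivAt (fun β' : ℝ => -(α⁻¹ * β'⁻¹)) (α⁻¹ * (β ^ 2)⁻¹) β := by
    have := ((hasDerivAt_inv hβ).const_mul α⁻¹).neg
    refine this.congr_deriv ?_
    ring
  exact (h1.mul h2).deriv

lemma d2bb_eq (z : ℕ) (a : ℝ) {α β : ℝ} (hβ : 0 < β) :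
    d2bb z a α β =
      (S2 (z : ℝ) (gam α β a) * -((Real.log a - Real.log α) * (β ^ 2)⁻¹))
          * -((Real.log a - Real.log α) * (β ^ 2)⁻¹)
        + S1 (z : ℝ) (gam α β a) * (2 * (Real.log a - Real.log α) / β ^ 3) := by
  have hev : (fun β' => deriv (fun β'' => logp z a α β'') β')
      =ᶠ[nhds β] fun β' => S1 (z : ℝ) (gam α β' a)
        * -((Real.log a - Real.log α) * (β' ^ 2)⁻¹) := by
    filter_upwards [isOpen_Ioi.mem_nhds hβ] with β' hβ'
    exact deriv_inner_b z a α (ne_of_gt hβ')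
  rw [d2bb, hev.deriv_eq]
  have h1 : HasDerivAt (fun β' => S1 (z : ℝ) (gam α β' a))
      (S2 (z : ℝ) (gam α β a) * -((Real.log a - Real.log α) * (β ^ 2)⁻¹)) β :=
    (hasDerivAt_S1 _ _).comp β (hg_b a α hβ.ne')
  have h2 : HasDerivAt (fun β' : ℝ => -((Real.log a - Real.log α) * (β' ^ 2)⁻¹))
      (2 * (Real.log a - Real.log α) / β ^ 3) β := by
    have hp : HasDerivAt (fun β' : ℝ => (β' ^ 2)⁻¹) (-(2 * β) / (β ^ 2) ^ 2) β := by
      have := (hasDerivAt_pow 2 β).inv (pow_ne_zero 2 hβ.ne')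
      refine this.congr_deriv ?_
      push_cast; ring
    have := (hp.const_mul (Real.log a - Real.log α)).neg
    refine this.congr_deriv ?_
    field_simp
  exact (h1.mul h2).deriv

/-- A Fisher information entry
`-∫_{(0,∞)} Σ_{z∈{0,1}} p(z|a,θ)·∂²(log p(z|a,θ))·p(a) da`
for a given choice `d2` of second partial derivative. -/
noncomputable def fisherEntry (p : ℝ → ℝ) (d2 : ℕ → ℝ → ℝ → ℝ → ℝ) (α β : ℝ) : ℝ :=
  -∫ a in Set.Ioi (0 : ℝ),
    (pz 0 α β a * d2 0 a α β + pz 1 α β a * d2 1 a α β) * p a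

/-- The integrand of `A_{k1}`. -/
noncomputable def Ak1Int (p : ℝ → ℝ) (k : ℕ) (α β : ℝ) (a : ℝ) : ℝ :=
  Real.log (a / α) ^ k * (Phi' (gam α β a) ^ 2 / Phi (gam α β a)) * p a

/-- The integrand of `A_{k2}`. -/
noncomputable def Ak2Int (p : ℝ → ℝ) (k : ℕ) (α β : ℝ) (a : ℝ) : ℝ :=
  Real.log (a / α) ^ k * (Phi' (gam α β a) ^ 2 / Phi (-gam α β a)) * p a

/-- `A_{k1} = ∫₀^∞ log^k(a/α)·Φ'(γ(a))²/Φ(γ(a))·p(a) da`. -/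
noncomputable def Ak1 (p : ℝ → ℝ) (k : ℕ) (α β : ℝ) : ℝ :=
  ∫ a in Set.Ioi (0 : ℝ), Ak1Int p k α β a

/-- `A_{k2} = ∫₀^∞ log^k(a/α)·Φ'(γ(a))²/Φ(-γ(a))·p(a) da`. -/
noncomputable def Ak2 (p : ℝ → ℝ) (k : ℕ) (α β : ℝ) : ℝ :=
  ∫ a in Set.Ioi (0 : ℝ), Ak2Int p k α β a

lemma pt_aa (p : ℝ → ℝ) {α β : ℝ} (hα : 0 < α) (hβ : 0 < β) {a : ℝ} (ha : a ∈ Ioi (0:ℝ)) :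
    (pz 0 α β a * d2aa 0 a α β + pz 1 α β a * d2aa 1 a α β) * p a
      = -((Ak1Int p 0 α β a + Ak2Int p 0 α β a) / (α ^ 2 * β ^ 2)) := by
  have hu := Phi_pos (gam α β a)
  have hv := one_sub_Phi_pos (gam α β a)
  rw [d2aa_eq 0 a hα, d2aa_eq 1 a hα]
  simp only [pz, Ak1Int, Ak2Int, S1, S2, Phi_neg, Nat.cast_zero, Nat.cast_one, pow_zero,
    pow_one, Nat.sub_zero, Nat.sub_self, Real.log_div (ne_of_gt (mem_Ioi.mp ha)) hα.ne',
    gam] at *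
  field_simp
  ring

lemma pt_ab (p : ℝ → ℝ) {α β : ℝ} (hα : 0 < α) (hβ : 0 < β) {a : ℝ} (ha : a ∈ Ioi (0:ℝ)) :
    (pz 0 α β a * d2ab 0 a α β + pz 1 α β a * d2ab 1 a α β) * p a
      = -((Ak1Int p 1 α β a + Ak2Int p 1 α β a) / (α * β ^ 3)) := by
  have hu := Phi_pos (gam α β a)
  have hv := one_sub_Phi_pos (gam α β a)
  rw [d2ab_eq 0 a hα hβ.ne', d2ab_eq 1 a hα hβ.ne']
  simp only [pz, Ak1Int, Ak2Int, S1, S2, Phi_neg, Nat.cast_zero, Nat.cast_one, pow_zero,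
    pow_one, Nat.sub_zero, Nat.sub_self, Real.log_div (ne_of_gt (mem_Ioi.mp ha)) hα.ne',
    gam] at *
  field_simp
  ring

lemma pt_ba (p : ℝ → ℝ) {α β : ℝ} (hα : 0 < α) (hβ : 0 < β) {a : ℝ} (ha : a ∈ Ioi (0:ℝ)) :
    (pz 0 α β a * d2ba 0 a α β + pz 1 α β a * d2ba 1 a α β) * p a
      = -((Ak1Int p 1 α β a + Ak2Int p 1 α β a) / (α * β ^ 3)) := by
  have hu := Phi_pos (gam α β a)
  have hv := one_sub_Phi_pos (gam α β a)
  rw [d2ba_eq 0 a hα hβ.ne', d2ba_eq 1 a hα hβ.ne']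
  simp only [pz, Ak1Int, Ak2Int, S1, S2, Phi_neg, Nat.cast_zero, Nat.cast_one, pow_zero,
    pow_one, Nat.sub_zero, Nat.sub_self, Real.log_div (ne_of_gt (mem_Ioi.mp ha)) hα.ne',
    gam] at *
  field_simp
  ring

lemma pt_bb (p : ℝ → ℝ) {α β : ℝ} (hα : 0 < α) (hβ : 0 < β) {a : ℝ} (ha : a ∈ Ioi (0:ℝ)) :
    (pz 0 α β a * d2bb 0 a α β + pz 1 α β a * d2bb 1 a α β) * p a
      = -((Ak1Int p 2 α β a + Ak2Int p 2 α β a) / β ^ 4) := by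
  have hu := Phi_pos (gam α β a)
  have hv := one_sub_Phi_pos (gam α β a)
  rw [d2bb_eq 0 a hβ, d2bb_eq 1 a hβ]
  simp only [pz, Ak1Int, Ak2Int, S1, S2, Phi_neg, Nat.cast_zero, Nat.cast_one, pow_zero,
    pow_one, Nat.sub_zero, Nat.sub_self, Real.log_div (ne_of_gt (mem_Ioi.mp ha)) hα.ne',
    gam] at *
  field_simp
  ring

lemma fisher_eq (p : ℝ → ℝ) (d2 : ℕ → ℝ → ℝ → ℝ → ℝ) (k : ℕ) (C : ℝ) {α β : ℝ}
    (hInt1 : IntegrableOn (Ak1Int p k α β) (Ioi 0))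
    (hInt2 : IntegrableOn (Ak2Int p k α β) (Ioi 0))
    (hpt : ∀ a ∈ Ioi (0:ℝ), (pz 0 α β a * d2 0 a α β + pz 1 α β a * d2 1 a α β) * p a
        = -((Ak1Int p k α β a + Ak2Int p k α β a) / C)) :
    fisherEntry p d2 α β = (Ak1 p k α β + Ak2 p k α β) / C := by
  unfold fisherEntry
  rw [setIntegral_congr_fun measurableSet_Ioi
    (g := fun a => -((Ak1Int p k α β a + Ak2Int p k α β a) / C)) hpt]
  rw [integral_neg, neg_neg, integral_div, integral_add hInt1 hInt2]
  rfl


/-- The Fisher information matrix of the log-normal (probit) fragility model equals the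
`2×2` matrix with entries `(A₀₁+A₀₂)/(α²β²)`, `(A₁₁+A₁₂)/(αβ³)` (off-diagonal), and
`(A₂₁+A₂₂)/β⁴`, provided the integrals `A_{kj}` are finite. -/
theorem stmt7 (p : ℝ → ℝ) (hp0 : ∀ a, 0 ≤ p a)
    (hp1 : ∫ a in Set.Ioi (0 : ℝ), p a = 1)
    (α β : ℝ) (hα : 0 < α) (hβ : 0 < β)
    (hInt1 : ∀ k : ℕ, k ≤ 2 → IntegrableOn (Ak1Int p k α β) (Set.Ioi 0))
    (hInt2 : ∀ k : ℕ, k ≤ 2 → IntegrableOn (Ak2Int p k α β) (Set.Ioi 0)) :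
    !![fisherEntry p d2aa α β, fisherEntry p d2ab α β;
       fisherEntry p d2ba α β, fisherEntry p d2bb α β] =
    !![(Ak1 p 0 α β + Ak2 p 0 α β) / (α ^ 2 * β ^ 2),
       (Ak1 p 1 α β + Ak2 p 1 α β) / (α * β ^ 3);
       (Ak1 p 1 α β + Ak2 p 1 α β) / (α * β ^ 3),
       (Ak1 p 2 α β + Ak2 p 2 α β) / β ^ 4] := by
  have e11 := fisher_eq p d2aa 0 (α ^ 2 * β ^ 2) (hInt1 0 (by norm_num)) (hInt2 0 (by norm_num))
    (fun a ha => pt_aa p hα hβ ha)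
  have e12 := fisher_eq p d2ab 1 (α * β ^ 3) (hInt1 1 (by norm_num)) (hInt2 1 (by norm_num))
    (fun a ha => pt_ab p hα hβ ha)
  have e21 := fisher_eq p d2ba 1 (α * β ^ 3) (hInt1 1 (by norm_num)) (hInt2 1 (by norm_num))
    (fun a ha => pt_ba p hα hβ ha)
  have e22 := fisher_eq p d2bb 2 (β ^ 4) (hInt1 2 (by norm_num)) (hInt2 2 (by norm_num))
    (fun a ha => pt_bb p hα hβ ha)
  rw [e11, e12, e21, e22]
end

section
/- Assume the intensity measure density is log-normal: p(a) = (√(2πσ²)·a)^{-1}·exp(-(log a - μ)²/(2σ²)) on (0,∞), with parameters μ ∈ ℝ, σ > 0. Let J(θ) be the Jeffreys prior, J(θ)² = |A_{01,02}·A_{21,22} − A_{11,12}²| / (α²β⁶), where for k = 0,1,2, A_{k1,k2}(α,β) = ∫_0^∞ log^k(a/α)·Φ'(γ(a))²/[Φ(γ(a))(1-Φ(γ(a)))]·p(a) da, γ(a) = (log a - log α)/β, Φ'(x) = (2π)^{-1/2}exp(-x²/2). Then for each fixed α > 0, J((α,β)) ~ E'/(αβ³) as β → ∞, where E' = 2σ/π.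 -/
open MeasureTheory Real Filter Set

/-- The log-normal intensity measure density
`p(a) = (√(2πσ²)·a)⁻¹ exp(-(log a - μ)²/(2σ²))`. -/
noncomputable def pLN (μ σ a : ℝ) : ℝ :=
  (Real.sqrt (2 * Real.pi * σ ^ 2) * a)⁻¹ * Real.exp (-(Real.log a - μ) ^ 2 / (2 * σ ^ 2))

/-- `A_{k1,k2}(α,β) = ∫₀^∞ log^k(a/α)·Φ'(γ(a))²/[Φ(γ(a))(1-Φ(γ(a)))]·p(a) da`
with `γ(a) = (log a - log α)/β`. -/
noncomputable def A (μ σ : ℝ) (k : ℕ) (α β : ℝ) : ℝ :=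
  ∫ a in Set.Ioi (0 : ℝ),
    Real.log (a / α) ^ k *
      (Phi' ((Real.log a - Real.log α) / β) ^ 2 /
        (Phi ((Real.log a - Real.log α) / β) *
          (1 - Phi ((Real.log a - Real.log α) / β)))) * pLN μ σ a

/-- The Jeffreys prior, `J(θ) = √(|A₀₁,₀₂·A₂₁,₂₂ − A₁₁,₁₂²| / (α²β⁶))`. -/
noncomputable def Jeff (μ σ α β : ℝ) : ℝ :=
  Real.sqrt (|A μ σ 0 α β * A μ σ 2 α β - A μ σ 1 α β ^ 2| / (α ^ 2 * β ^ 6))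

namespace Stmt11Aux

noncomputable def Gq (y : ℝ) : ℝ := Phi' y ^ 2 / (Phi y * (1 - Phi y))

lemma E_eq : (fun t : ℝ => Real.exp (-t ^ 2 / 2)) = fun t => Real.exp (-(1/2 : ℝ) * t ^ 2) := by
  funext t; ring_nf

lemma integrableE : Integrable (fun t : ℝ => Real.exp (-t ^ 2 / 2)) := by
  rw [E_eq]; exact integrable_exp_neg_mul_sq (by norm_num)

lemma integralE : ∫ t : ℝ, Real.exp (-t ^ 2 / 2) = Real.sqrt (2 * Real.pi) := by
  rw [E_eq, integral_gaussian, show Real.pi / (1/2 : ℝ) = 2 * Real.pi by ring]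

lemma sqrt2pi_pos : 0 < Real.sqrt (2 * Real.pi) :=
  Real.sqrt_pos.2 (by positivity)

lemma Ioi_pos (x : ℝ) : 0 < ∫ t in Set.Ioi x, Real.exp (-t ^ 2 / 2) := by
  rw [setIntegral_pos_iff_support_of_nonneg_ae
    (Filter.Eventually.of_forall fun t => (Real.exp_pos _).le) integrableE.integrableOn]
  have : Function.support (fun t : ℝ => Real.exp (-t ^ 2 / 2)) = Set.univ := by
    ext t; simp [Function.support, (Real.exp_pos _).ne']
  rw [this, Set.univ_inter]
  simp [Real.volume_Ioi]

lemma Iic_pos (x : ℝ) : 0 < ∫ t in Set.Iic x, Real.exp (-t ^ 2 / 2) := by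
  rw [setIntegral_pos_iff_support_of_nonneg_ae
    (Filter.Eventually.of_forall fun t => (Real.exp_pos _).le) integrableE.integrableOn]
  have : Function.support (fun t : ℝ => Real.exp (-t ^ 2 / 2)) = Set.univ := by
    ext t; simp [Function.support, (Real.exp_pos _).ne']
  rw [this, Set.univ_inter]
  simp [Real.volume_Iic]

lemma split (x : ℝ) :
    (∫ t in Set.Iic x, Real.exp (-t ^ 2 / 2)) + ∫ t in Set.Ioi x, Real.exp (-t ^ 2 / 2)
      = Real.sqrt (2 * Real.pi) := by
  rw [← integralE, ← setIntegral_union (Set.Iic_disjoint_Ioi le_rfl) measurableSet_Ioi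
    integrableE.integrableOn integrableE.integrableOn, Set.Iic_union_Ioi,
    MeasureTheory.setIntegral_univ]

lemma phi_pos (x : ℝ) : 0 < Phi x :=
  mul_pos (inv_pos.2 sqrt2pi_pos) (Iic_pos x)

lemma phi_one_sub (x : ℝ) :
    1 - Phi x = (Real.sqrt (2 * Real.pi))⁻¹ * ∫ t in Set.Ioi x, Real.exp (-t ^ 2 / 2) := by
  have hN : (Real.sqrt (2 * Real.pi))⁻¹ * Real.sqrt (2 * Real.pi) = 1 :=
    inv_mul_cancel₀ sqrt2pi_pos.ne'
  unfold Phi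
  rw [show (∫ t in Set.Iic x, Real.exp (-t ^ 2 / 2))
      = Real.sqrt (2 * Real.pi) - ∫ t in Set.Ioi x, Real.exp (-t ^ 2 / 2) by
        linarith [split x], mul_sub, hN]
  ring

lemma phi_lt_one (x : ℝ) : Phi x < 1 := by
  have h := phi_one_sub x
  have h2 : 0 < (Real.sqrt (2 * Real.pi))⁻¹ * ∫ t in Set.Ioi x, Real.exp (-t ^ 2 / 2) :=
    mul_pos (inv_pos.2 sqrt2pi_pos) (Ioi_pos x)
  linarith

lemma phi_neg (x : ℝ) : Phi (-x) = 1 - Phi x := by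
  rw [phi_one_sub]
  unfold Phi
  congr 1
  have h1 : ∫ t in Set.Iic (-x), Real.exp (-t ^ 2 / 2)
      = ∫ t in Set.Iic (-x), Real.exp (-(-t) ^ 2 / 2) :=
    setIntegral_congr_fun measurableSet_Iic fun t _ => by rw [neg_sq]
  rw [h1, integral_comp_neg_Iic (-x) (fun t => Real.exp (-t ^ 2 / 2)), neg_neg]

lemma phi_zero : Phi 0 = 1 / 2 := by
  have := phi_neg 0
  rw [neg_zero] at this
  linarith

lemma phi_cont : Continuous Phi := by
  have : Phi = fun x => (Real.sqrt (2 * Real.pi))⁻¹ *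
      ((∫ t in Set.Iic (0:ℝ), Real.exp (-t ^ 2 / 2)) + ∫ t in (0:ℝ)..x, Real.exp (-t ^ 2 / 2)) := by
    funext x
    unfold Phi
    congr 1
    rw [← intervalIntegral.integral_Iic_sub_Iic integrableE.integrableOn integrableE.integrableOn]
    ring
  rw [this]
  exact continuous_const.mul (continuous_const.add (integrableE.continuous_primitive 0))

lemma phi'_cont : Continuous Phi' :=
  continuous_const.mul ((Real.continuous_exp.comp (by continuity)))

lemma Gq_cont : Continuous Gq := by
  apply (phi'_cont.pow 2).div (phi_cont.mul (continuous_const.sub phi_cont))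
  intro x
  exact (mul_pos (phi_pos x) (show (0:ℝ) < 1 - Phi x by linarith [phi_lt_one x])).ne'

lemma Gq_nonneg (y : ℝ) : 0 ≤ Gq y :=
  div_nonneg (sq_nonneg _) (mul_pos (phi_pos y) (by linarith [phi_lt_one y])).le

lemma Gq_zero : Gq 0 = 2 / Real.pi := by
  unfold Gq Phi'
  rw [phi_zero]
  have h2 : ((Real.sqrt (2 * Real.pi))⁻¹ * Real.exp (-(0:ℝ) ^ 2 / 2)) ^ 2 = (2 * Real.pi)⁻¹ := by
    rw [show (-(0:ℝ) ^ 2 / 2) = 0 by norm_num, Real.exp_zero, mul_one, inv_pow,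
      Real.sq_sqrt (show (0:ℝ) ≤ 2 * Real.pi by positivity)]
  rw [h2]
  have hπ := Real.pi_pos
  field_simp
  ring

end Stmt11Aux

namespace Stmt11Aux

lemma phi_half_le {y : ℝ} (hy : 0 ≤ y) : 1 / 2 ≤ Phi y := by
  rw [← phi_zero]
  unfold Phi
  apply mul_le_mul_of_nonneg_left _ (inv_pos.2 sqrt2pi_pos).le
  exact setIntegral_mono_set integrableE.integrableOn
    (Filter.Eventually.of_forall fun t => (Real.exp_pos _).le)
    (HasSubset.Subset.eventuallyLE (Set.Iic_subset_Iic.2 hy))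

lemma tail_lb {y : ℝ} (hy : 0 ≤ y) :
    Real.exp (-(y + 1) ^ 2 / 2) ≤ ∫ t in Set.Ioi y, Real.exp (-t ^ 2 / 2) := by
  have h1 : Real.exp (-(y + 1) ^ 2 / 2) * (volume (Set.Ioc y (y + 1))).toReal
      ≤ ∫ t in Set.Ioc y (y + 1), Real.exp (-t ^ 2 / 2) := by
    rw [← Measure.real]
    apply setIntegral_ge_of_const_le_real measurableSet_Ioc (by simp)
    · intro t ht
      apply Real.exp_le_exp.2
      have h2 : t ^ 2 ≤ (y + 1) ^ 2 := by nlinarith [ht.1, ht.2]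
      linarith
    · exact integrableE.integrableOn
  have h2 : (volume (Set.Ioc y (y + 1))).toReal = 1 := by
    simp [Real.volume_Ioc]
  rw [h2, mul_one] at h1
  refine h1.trans (setIntegral_mono_set integrableE.integrableOn
    (Filter.Eventually.of_forall fun t => (Real.exp_pos _).le)
    (HasSubset.Subset.eventuallyLE Set.Ioc_subset_Ioi_self))

lemma Gq_even (y : ℝ) : Gq (-y) = Gq y := by
  unfold Gq Phi'
  rw [neg_sq, phi_neg]
  ring

lemma Gq_bound (y : ℝ) :
    Gq y ≤ 2 * (Real.sqrt (2 * Real.pi))⁻¹ * Real.exp 1 := by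
  set N := (Real.sqrt (2 * Real.pi))⁻¹ with hN
  have hNpos : 0 < N := inv_pos.2 sqrt2pi_pos
  have main : ∀ z : ℝ, 0 ≤ z → Gq z ≤ 2 * N * Real.exp 1 := by
    intro z hz
    have hden : (1 / 2) * (N * Real.exp (-(z + 1) ^ 2 / 2)) ≤ Phi z * (1 - Phi z) := by
      have h1 : N * Real.exp (-(z + 1) ^ 2 / 2) ≤ 1 - Phi z := by
        rw [phi_one_sub]
        exact mul_le_mul_of_nonneg_left (tail_lb hz) hNpos.le
      have h2 : (0:ℝ) ≤ N * Real.exp (-(z + 1) ^ 2 / 2) := by positivity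
      nlinarith [phi_half_le hz, phi_lt_one z, phi_pos z]
    have hdenpos : 0 < Phi z * (1 - Phi z) :=
      mul_pos (phi_pos z) (by linarith [phi_lt_one z])
    unfold Gq
    rw [div_le_iff₀ hdenpos]
    calc Phi' z ^ 2 = N ^ 2 * Real.exp (-z ^ 2) := by
          unfold Phi'
          rw [mul_pow, sq (Real.exp _), ← Real.exp_add]
          rw [hN]
          ring_nf
      _ ≤ N ^ 2 * (Real.exp 1 * Real.exp (-(z + 1) ^ 2 / 2)) := by
          rw [← Real.exp_add]
          exact mul_le_mul_of_nonneg_left (Real.exp_le_exp.2 (by nlinarith [sq_nonneg (z - 1)]))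
            (sq_nonneg N)
      _ = (2 * N * Real.exp 1) * ((1 / 2) * (N * Real.exp (-(z + 1) ^ 2 / 2))) := by ring
      _ ≤ (2 * N * Real.exp 1) * (Phi z * (1 - Phi z)) := by
          apply mul_le_mul_of_nonneg_left hden (by positivity)
  rcases le_or_gt 0 y with hy | hy
  · exact main y hy
  · rw [← Gq_even]
    exact main (-y) (by linarith)

end Stmt11Aux

namespace Stmt11Aux

noncomputable def gphi (μ σ x : ℝ) : ℝ :=
  (Real.sqrt (2 * Real.pi * σ ^ 2))⁻¹ * Real.exp (-(x - μ) ^ 2 / (2 * σ ^ 2))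

lemma gphi_cont (μ σ : ℝ) : Continuous (gphi μ σ) :=
  continuous_const.mul (Real.continuous_exp.comp (by continuity))

lemma gphi_nonneg (μ σ x : ℝ) : 0 ≤ gphi μ σ x := by
  unfold gphi
  positivity

section moments

variable {σ : ℝ}

lemma hb_pos (hσ : 0 < σ) : 0 < (2 * σ ^ 2)⁻¹ := by positivity

lemma integrable_g0 (hσ : 0 < σ) : Integrable (fun t : ℝ => Real.exp (-(2 * σ ^ 2)⁻¹ * t ^ 2)) :=
  integrable_exp_neg_mul_sq (hb_pos hσ)

lemma integrable_g1 (hσ : 0 < σ) : Integrable (fun t : ℝ => t * Real.exp (-(2 * σ ^ 2)⁻¹ * t ^ 2)) :=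
  integrable_mul_exp_neg_mul_sq (hb_pos hσ)

lemma sq_le_aux {b t : ℝ} (hb : 0 < b) :
    t ^ 2 * Real.exp (-b * t ^ 2) ≤ (2 / b) * Real.exp (-(b / 2) * t ^ 2) := by
  have h1 : (b / 2) * t ^ 2 ≤ Real.exp ((b / 2) * t ^ 2) := by
    linarith [Real.add_one_le_exp ((b / 2) * t ^ 2)]
  have h2 : t ^ 2 ≤ (2 / b) * Real.exp ((b / 2) * t ^ 2) := by
    have h3 := mul_le_mul_of_nonneg_left h1 (le_of_lt (div_pos two_pos hb))
    have h4 : (2 / b) * ((b / 2) * t ^ 2) = t ^ 2 := by field_simp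
    linarith
  calc t ^ 2 * Real.exp (-b * t ^ 2)
      ≤ ((2 / b) * Real.exp ((b / 2) * t ^ 2)) * Real.exp (-b * t ^ 2) :=
        mul_le_mul_of_nonneg_right h2 (Real.exp_pos _).le
    _ = (2 / b) * Real.exp (-(b / 2) * t ^ 2) := by
        rw [mul_assoc, ← Real.exp_add]
        ring_nf

lemma integrable_g2' {b : ℝ} (hb : 0 < b) :
    Integrable (fun t : ℝ => t ^ 2 * Real.exp (-b * t ^ 2)) := by
  apply Integrable.mono' ((integrable_exp_neg_mul_sq (half_pos hb)).const_mul (2 / b))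
  · exact ((continuous_pow 2).mul
      (Real.continuous_exp.comp (by continuity))).aestronglyMeasurable
  · refine Filter.Eventually.of_forall fun t => ?_
    rw [Real.norm_eq_abs, abs_of_nonneg (by positivity)]
    simpa [neg_div, div_mul_eq_mul_div, mul_comm] using sq_le_aux (t := t) hb

lemma integrable_g2 (hσ : 0 < σ) : Integrable (fun t : ℝ => t ^ 2 * Real.exp (-(2 * σ ^ 2)⁻¹ * t ^ 2)) :=
  integrable_g2' (hb_pos hσ)

lemma integral_g1 {b : ℝ} : ∫ t : ℝ, t * Real.exp (-b * t ^ 2) = 0 := by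
  have h := integral_neg_eq_self (fun t : ℝ => t * Real.exp (-b * t ^ 2)) volume
  simp only [neg_sq] at h
  have h2 : ∫ t : ℝ, -t * Real.exp (-b * t ^ 2) = - ∫ t : ℝ, t * Real.exp (-b * t ^ 2) := by
    rw [← integral_neg]
    congr 1
    funext t
    ring
  rw [h2] at h
  linarith

lemma integral_g2 {b : ℝ} (hb : 0 < b) :
    ∫ t : ℝ, t ^ 2 * Real.exp (-b * t ^ 2)
      = b ^ (-(3:ℝ)/2) * Real.sqrt Real.pi / 2 := by
  have h0 : ∫ t : ℝ, t ^ 2 * Real.exp (-b * t ^ 2)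
      = ∫ t : ℝ, |t| ^ 2 * Real.exp (-b * |t| ^ 2) := by
    congr 1
    funext t
    rw [sq_abs]
  rw [h0, integral_comp_abs (f := fun t : ℝ => t ^ 2 * Real.exp (-b * t ^ 2))]
  have h1 : ∫ t in Set.Ioi (0:ℝ), t ^ 2 * Real.exp (-b * t ^ 2)
      = ∫ t in Set.Ioi (0:ℝ), t ^ (2:ℝ) * Real.exp (-b * t ^ (2:ℝ)) := by
    refine setIntegral_congr_fun measurableSet_Ioi fun t ht => ?_
    rw [show t ^ (2:ℝ) = t ^ (2:ℕ) by rw [← Real.rpow_natCast t 2]; norm_num]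
  rw [h1, integral_rpow_mul_exp_neg_mul_rpow two_pos (by norm_num) hb]
  rw [show (-(2+1)/2 : ℝ) = -(3:ℝ)/2 by norm_num, show ((2+1)/2 : ℝ) = 1/2 + 1 by norm_num,
    Real.Gamma_add_one (by norm_num), Real.Gamma_one_half_eq]
  ring

end moments

end Stmt11Aux

namespace Stmt11Aux

section gphiMoments

variable {μ σ : ℝ}

lemma gphi_eq (μ σ x : ℝ) : gphi μ σ x
    = (Real.sqrt (2 * Real.pi * σ ^ 2))⁻¹ * Real.exp (-(2 * σ ^ 2)⁻¹ * (x - μ) ^ 2) := by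
  unfold gphi
  rw [show -(x - μ) ^ 2 / (2 * σ ^ 2) = -(2 * σ ^ 2)⁻¹ * (x - μ) ^ 2 by ring]

lemma sqrt2piσ_pos (hσ : 0 < σ) : 0 < Real.sqrt (2 * Real.pi * σ ^ 2) :=
  Real.sqrt_pos.2 (by positivity)

lemma integrable_gphi (hσ : 0 < σ) : Integrable (gphi μ σ) := by
  refine (((integrable_g0 hσ).comp_sub_right μ).const_mul
    (Real.sqrt (2 * Real.pi * σ ^ 2))⁻¹).congr (Filter.Eventually.of_forall fun x => ?_)
  rw [gphi_eq]

lemma integrable_m1 (hσ : 0 < σ) : Integrable (fun x => (x - μ) * gphi μ σ x) := by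
  refine (((integrable_g1 hσ).comp_sub_right μ).const_mul
    (Real.sqrt (2 * Real.pi * σ ^ 2))⁻¹).congr (Filter.Eventually.of_forall fun x => ?_)
  simp only [gphi_eq]
  ring

lemma integrable_m2 (hσ : 0 < σ) : Integrable (fun x => (x - μ) ^ 2 * gphi μ σ x) := by
  refine (((integrable_g2 hσ).comp_sub_right μ).const_mul
    (Real.sqrt (2 * Real.pi * σ ^ 2))⁻¹).congr (Filter.Eventually.of_forall fun x => ?_)
  simp only [gphi_eq]
  ring

lemma M0 (hσ : 0 < σ) : ∫ x : ℝ, gphi μ σ x = 1 := by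
  simp_rw [gphi_eq, MeasureTheory.integral_const_mul]
  rw [integral_sub_right_eq_self (fun t : ℝ => Real.exp (-(2 * σ ^ 2)⁻¹ * t ^ 2)) μ,
    integral_gaussian, show Real.pi / (2 * σ ^ 2)⁻¹ = 2 * Real.pi * σ ^ 2 by
      field_simp]
  exact inv_mul_cancel₀ (sqrt2piσ_pos hσ).ne'

lemma M1 (hσ : 0 < σ) : ∫ x : ℝ, (x - μ) * gphi μ σ x = 0 := by
  simp_rw [gphi_eq, show ∀ x : ℝ, (x - μ) * ((Real.sqrt (2 * Real.pi * σ ^ 2))⁻¹ *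
      Real.exp (-(2 * σ ^ 2)⁻¹ * (x - μ) ^ 2))
      = (Real.sqrt (2 * Real.pi * σ ^ 2))⁻¹ *
        ((x - μ) * Real.exp (-(2 * σ ^ 2)⁻¹ * (x - μ) ^ 2)) from fun x => by ring,
    MeasureTheory.integral_const_mul]
  rw [integral_sub_right_eq_self (fun t : ℝ => t * Real.exp (-(2 * σ ^ 2)⁻¹ * t ^ 2)) μ,
    integral_g1, mul_zero]

lemma M2 (hσ : 0 < σ) : ∫ x : ℝ, (x - μ) ^ 2 * gphi μ σ x = σ ^ 2 := by
  simp_rw [gphi_eq, show ∀ x : ℝ, (x - μ) ^ 2 * ((Real.sqrt (2 * Real.pi * σ ^ 2))⁻¹ *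
      Real.exp (-(2 * σ ^ 2)⁻¹ * (x - μ) ^ 2))
      = (Real.sqrt (2 * Real.pi * σ ^ 2))⁻¹ *
        ((x - μ) ^ 2 * Real.exp (-(2 * σ ^ 2)⁻¹ * (x - μ) ^ 2)) from fun x => by ring,
    MeasureTheory.integral_const_mul]
  rw [integral_sub_right_eq_self (fun t : ℝ => t ^ 2 * Real.exp (-(2 * σ ^ 2)⁻¹ * t ^ 2)) μ,
    integral_g2 (hb_pos hσ)]
  have h2σ : (0:ℝ) < 2 * σ ^ 2 := by positivity
  have hr : ((2 * σ ^ 2)⁻¹ : ℝ) ^ (-(3:ℝ)/2) = (2 * σ ^ 2) ^ ((3:ℝ)/2) := by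
    rw [Real.inv_rpow h2σ.le, show (-(3:ℝ)/2) = -((3:ℝ)/2) by ring, Real.rpow_neg h2σ.le,
      inv_inv]
  have hsplit : ((2 * σ ^ 2):ℝ) ^ ((3:ℝ)/2) = (2 * σ ^ 2) * Real.sqrt (2 * σ ^ 2) := by
    rw [show ((3:ℝ)/2) = 1 + (1/2 : ℝ) by norm_num, Real.rpow_add h2σ, Real.rpow_one,
      Real.sqrt_eq_rpow]
  rw [hr, hsplit,
    show Real.sqrt (2 * Real.pi * σ ^ 2) = Real.sqrt (2 * σ ^ 2) * Real.sqrt Real.pi by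
      rw [show 2 * Real.pi * σ ^ 2 = (2 * σ ^ 2) * Real.pi by ring,
        Real.sqrt_mul h2σ.le]]
  have hs1 : (0:ℝ) < Real.sqrt (2 * σ ^ 2) := Real.sqrt_pos.2 h2σ
  have hs2 : (0:ℝ) < Real.sqrt Real.pi := Real.sqrt_pos.2 Real.pi_pos
  have hsq : Real.sqrt (2 * σ ^ 2) * Real.sqrt (2 * σ ^ 2) = 2 * σ ^ 2 :=
    Real.mul_self_sqrt h2σ.le
  field_simp

end gphiMoments

end Stmt11Aux

namespace Stmt11Aux

noncomputable def Phi2' := Phi'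

section shifted

variable {μ σ : ℝ}

lemma integrable_L1 (hσ : 0 < σ) (L : ℝ) :
    Integrable (fun x => (x - L) * gphi μ σ x) := by
  refine ((integrable_m1 (μ := μ) hσ).add
    ((integrable_gphi (μ := μ) hσ).const_mul (μ - L))).congr
    (Filter.Eventually.of_forall fun x => ?_)
  simp only [Pi.add_apply]
  ring

lemma integrable_L2 (hσ : 0 < σ) (L : ℝ) :
    Integrable (fun x => (x - L) ^ 2 * gphi μ σ x) := by
  refine (((integrable_m2 (μ := μ) hσ).add
    ((integrable_m1 (μ := μ) hσ).const_mul (2 * (μ - L)))).add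
    ((integrable_gphi (μ := μ) hσ).const_mul ((μ - L) ^ 2))).congr
    (Filter.Eventually.of_forall fun x => ?_)
  simp only [Pi.add_apply]
  ring

lemma integrable_quad (hσ : 0 < σ) (L : ℝ) :
    Integrable (fun x => (1 + (x - L) ^ 2) * gphi μ σ x) := by
  refine ((integrable_gphi (μ := μ) hσ).add (integrable_L2 (μ := μ) hσ L)).congr
    (Filter.Eventually.of_forall fun x => ?_)
  simp only [Pi.add_apply]
  ring

lemma IL0 (hσ : 0 < σ) (L : ℝ) : ∫ x : ℝ, (x - L) ^ 0 * gphi μ σ x = 1 := by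
  simp only [pow_zero, one_mul]
  exact M0 hσ

lemma IL1 (hσ : 0 < σ) (L : ℝ) : ∫ x : ℝ, (x - L) * gphi μ σ x = μ - L := by
  rw [show (fun x : ℝ => (x - L) * gphi μ σ x)
      = fun x => (x - μ) * gphi μ σ x + (μ - L) * gphi μ σ x by funext x; ring]
  rw [integral_add (integrable_m1 hσ) ((integrable_gphi hσ).const_mul _), M1 hσ,
    MeasureTheory.integral_const_mul, M0 hσ]
  ring

lemma IL2 (hσ : 0 < σ) (L : ℝ) :
    ∫ x : ℝ, (x - L) ^ 2 * gphi μ σ x = σ ^ 2 + (μ - L) ^ 2 := by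
  rw [show (fun x : ℝ => (x - L) ^ 2 * gphi μ σ x)
      = fun x => ((x - μ) ^ 2 * gphi μ σ x + (2 * (μ - L)) * ((x - μ) * gphi μ σ x))
          + (μ - L) ^ 2 * gphi μ σ x by funext x; ring]
  have hA : Integrable (fun x : ℝ => (x - μ) ^ 2 * gphi μ σ x
      + 2 * (μ - L) * ((x - μ) * gphi μ σ x)) :=
    (integrable_m2 (μ := μ) hσ).add ((integrable_m1 (μ := μ) hσ).const_mul _)
  rw [integral_add hA ((integrable_gphi (μ := μ) hσ).const_mul _),
    integral_add (integrable_m2 (μ := μ) hσ) ((integrable_m1 (μ := μ) hσ).const_mul _),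
    M2 hσ, MeasureTheory.integral_const_mul, M1 hσ, MeasureTheory.integral_const_mul, M0 hσ]
  ring

end shifted

section subst

lemma A_eq (μ σ : ℝ) (k : ℕ) (α : ℝ) (hα : 0 < α) (β : ℝ) :
    A μ σ k α β = ∫ x : ℝ,
      (x - Real.log α) ^ k * Gq ((x - Real.log α) / β) * gphi μ σ x := by
  unfold A
  have himg : Set.Ioi (0:ℝ) = Real.exp '' Set.univ := by
    rw [Set.image_univ, Real.range_exp]
  rw [himg, integral_image_eq_integral_abs_deriv_smul MeasurableSet.univ
    (fun x _ => (Real.hasDerivAt_exp x).hasDerivWithinAt) Real.exp_injective.injOn,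
    MeasureTheory.setIntegral_univ]
  refine integral_congr_ae (Filter.Eventually.of_forall fun x => ?_)
  have hlog : Real.log (Real.exp x / α) = x - Real.log α := by
    rw [Real.log_div (Real.exp_ne_zero x) hα.ne', Real.log_exp]
  have hloge : Real.log (Real.exp x) = x := Real.log_exp x
  have he : Real.exp x ≠ 0 := Real.exp_ne_zero x
  unfold pLN
  simp only [smul_eq_mul, hlog, hloge]
  have hGq : ∀ y : ℝ, Phi' y ^ 2 / (Phi y * (1 - Phi y)) = Gq y := fun y => rfl
  simp only [hGq]
  unfold gphi
  rw [abs_of_pos (Real.exp_pos x), mul_inv,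
    show -(x - μ) ^ 2 / (2 * σ ^ 2) = -(x - μ) ^ 2 / (2 * σ ^ 2) from rfl]
  set S := Real.sqrt (2 * Real.pi * σ ^ 2) with hS
  field_simp

end subst

end Stmt11Aux

namespace Stmt11Aux

lemma tendstoA (μ σ : ℝ) (hσ : 0 < σ) (α : ℝ) (hα : 0 < α) (k : ℕ)
    (hk : ∀ t : ℝ, |t| ^ k ≤ 1 + t ^ 2) :
    Filter.Tendsto (fun β => A μ σ k α β) Filter.atTop
      (nhds (2 / Real.pi * ∫ x : ℝ, (x - Real.log α) ^ k * gphi μ σ x)) := by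
  set L := Real.log α with hL
  set C := 2 * (Real.sqrt (2 * Real.pi))⁻¹ * Real.exp 1 with hC
  have hCpos : 0 < C := by
    rw [hC]
    positivity
  have key : Filter.Tendsto (fun β : ℝ => ∫ x : ℝ, (x - L) ^ k * Gq ((x - L) / β) * gphi μ σ x)
      Filter.atTop (nhds (∫ x : ℝ, (x - L) ^ k * (2 / Real.pi) * gphi μ σ x)) := by
    apply tendsto_integral_filter_of_dominated_convergence
      (bound := fun x => (1 + (x - L) ^ 2) * (C * gphi μ σ x))
    · refine Filter.Eventually.of_forall fun β => ?_
      exact ((((continuous_id.sub continuous_const).pow k).mul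
        (Gq_cont.comp ((continuous_id.sub continuous_const).div_const β))).mul
        (gphi_cont μ σ)).aestronglyMeasurable
    · refine Filter.Eventually.of_forall fun β => Filter.Eventually.of_forall fun x => ?_
      rw [Real.norm_eq_abs, abs_mul, abs_mul, abs_pow, abs_of_nonneg (Gq_nonneg _),
        abs_of_nonneg (gphi_nonneg _ _ _)]
      calc |x - L| ^ k * Gq ((x - L) / β) * gphi μ σ x
          ≤ ((1 + (x - L) ^ 2) * C) * gphi μ σ x := by
            apply mul_le_mul_of_nonneg_right _ (gphi_nonneg _ _ _)
            exact mul_le_mul (hk _) (Gq_bound _) (Gq_nonneg _) (by positivity)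
        _ = (1 + (x - L) ^ 2) * (C * gphi μ σ x) := by ring
    · refine ((integrable_quad (μ := μ) hσ L).const_mul C).congr
        (Filter.Eventually.of_forall fun x => ?_)
      ring
    · refine Filter.Eventually.of_forall fun x => ?_
      have hγ : Filter.Tendsto (fun β : ℝ => (x - L) / β) Filter.atTop (nhds 0) :=
        tendsto_const_nhds.div_atTop tendsto_id
      have hG : Filter.Tendsto (fun β : ℝ => Gq ((x - L) / β)) Filter.atTop (nhds (Gq 0)) :=
        (Gq_cont.continuousAt).tendsto.comp hγ
      rw [Gq_zero] at hG
      exact (hG.const_mul ((x - L) ^ k)).mul_const (gphi μ σ x)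
  have hfun : (fun β => A μ σ k α β)
      = fun β : ℝ => ∫ x : ℝ, (x - L) ^ k * Gq ((x - L) / β) * gphi μ σ x :=
    funext fun β => A_eq μ σ k α hα β
  have hval : ∫ x : ℝ, (x - L) ^ k * (2 / Real.pi) * gphi μ σ x
      = 2 / Real.pi * ∫ x : ℝ, (x - L) ^ k * gphi μ σ x := by
    rw [← MeasureTheory.integral_const_mul]
    congr 1
    funext x
    ring
  rw [hfun, ← hval]
  exact key

end Stmt11Aux


open Stmt11Aux

/-- For the log-normal IM density and each fixed `α > 0`,
`J((α,β)) ~ E'/(αβ³)` as `β → ∞`, where `E' = 2σ/π`. -/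
theorem stmt11 (μ σ : ℝ) (hσ : 0 < σ) (α : ℝ) (hα : 0 < α) :
    Filter.Tendsto (fun β : ℝ => Jeff μ σ α β / (2 * σ / Real.pi / (α * β ^ 3)))
      Filter.atTop (nhds 1) := by
  have hπ := Real.pi_pos
  set L := Real.log α with hL
  have hk0 : ∀ t : ℝ, |t| ^ 0 ≤ 1 + t ^ 2 := fun t => by
    simp [pow_zero]
    positivity
  have hk1 : ∀ t : ℝ, |t| ^ 1 ≤ 1 + t ^ 2 := fun t => by
    rw [pow_one]
    nlinarith [sq_abs t, sq_nonneg (|t| - 1)]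
  have hk2 : ∀ t : ℝ, |t| ^ 2 ≤ 1 + t ^ 2 := fun t => by
    rw [sq_abs]
    nlinarith
  have h0 := tendstoA μ σ hσ α hα 0 hk0
  have h1 := tendstoA μ σ hσ α hα 1 hk1
  have h2 := tendstoA μ σ hσ α hα 2 hk2
  rw [IL0 hσ L] at h0
  simp only [pow_one] at h1
  rw [IL1 hσ L] at h1
  rw [IL2 hσ L] at h2
  have hD : Filter.Tendsto (fun β : ℝ => A μ σ 0 α β * A μ σ 2 α β - A μ σ 1 α β ^ 2)
      Filter.atTop (nhds ((2 / Real.pi * 1) * (2 / Real.pi * (σ ^ 2 + (μ - L) ^ 2))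
        - (2 / Real.pi * (μ - L)) ^ 2)) := (h0.mul h2).sub (h1.pow 2)
  have hval : (2 / Real.pi * 1) * (2 / Real.pi * (σ ^ 2 + (μ - L) ^ 2))
      - (2 / Real.pi * (μ - L)) ^ 2 = (2 * σ / Real.pi) ^ 2 := by
    field_simp
    ring
  rw [hval] at hD
  have habs : Filter.Tendsto (fun β : ℝ => |A μ σ 0 α β * A μ σ 2 α β - A μ σ 1 α β ^ 2|)
      Filter.atTop (nhds ((2 * σ / Real.pi) ^ 2)) := by
    have := (continuous_abs.continuousAt (x := ((2 * σ / Real.pi) ^ 2 : ℝ))).tendsto.comp hD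
    rwa [abs_of_nonneg (sq_nonneg _)] at this
  have hsqrt : Filter.Tendsto
      (fun β : ℝ => Real.sqrt |A μ σ 0 α β * A μ σ 2 α β - A μ σ 1 α β ^ 2|)
      Filter.atTop (nhds (2 * σ / Real.pi)) := by
    have := (Real.continuous_sqrt.continuousAt
      (x := ((2 * σ / Real.pi) ^ 2 : ℝ))).tendsto.comp habs
    rwa [Real.sqrt_sq (by positivity)] at this
  have hfinal : Filter.Tendsto
      (fun β : ℝ => Real.sqrt |A μ σ 0 α β * A μ σ 2 α β - A μ σ 1 α β ^ 2|
        * (Real.pi / (2 * σ)))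
      Filter.atTop (nhds 1) := by
    have := hsqrt.mul_const (Real.pi / (2 * σ))
    rwa [show (2 * σ / Real.pi) * (Real.pi / (2 * σ)) = 1 by field_simp] at this
  refine Filter.Tendsto.congr' ?_ hfinal
  filter_upwards [Filter.eventually_gt_atTop (0 : ℝ)] with β hβ
  unfold Jeff
  have hab : 0 < α * β ^ 3 := by positivity
  rw [show α ^ 2 * β ^ 6 = (α * β ^ 3) ^ 2 by ring,
    Real.sqrt_div (abs_nonneg _), Real.sqrt_sq hab.le]
  field_simp
end
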